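/- Theorem (generic fiber inheritance): Let < be a product order on k[X₁,…,Xₙ] and let A ⊆ 𝔸ⁿ be a variety whose irreducible components are affine d-planes, each having X₁ among its minimal free variables. Suppose there is a nonempty Zariski-open U ⊆ 𝔸¹ and δ ∈ 𝔻_{n−1} with D(A_λ) = δ for all λ ∈ U. Then ℕe₁ ⊕ δ := {α ∈ ℕⁿ : p(α) ∈ δ} is contained in D(A), and it is the largest subset of D(A) that is a union of 1-planes γ + ℕe₁. -/

import Mathlib

open MvPolynomial

/-- `β` is the leading exponent of `f` with respect to the monomial order `m`. -/
def IsLeadExp {σ : Type*} {k : Type*} [CommSemiring k] (m : MonomialOrder σ)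
    (f : MvPolynomial σ k) (β : σ →₀ ℕ) : Prop :=
  β ∈ f.support ∧ ∀ α ∈ f.support, α ≠ β → m.toSyn α < m.toSyn β

/-- `C(I)`: the set of leading exponents of nonzero elements of the ideal `I`. -/
def expC {σ : Type*} {k : Type*} [CommSemiring k] (m : MonomialOrder σ)
    (I : Ideal (MvPolynomial σ k)) : Set (σ →₀ ℕ) :=
  {β | ∃ f ∈ I, IsLeadExp m f β}

/-- `D(I)`: the standard set (set of exponents of standard monomials) of the ideal `I`. -/
def expD {σ : Type*} {k : Type*} [CommSemiring k] (m : MonomialOrder σ)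
    (I : Ideal (MvPolynomial σ k)) : Set (σ →₀ ℕ) :=
  (expC m I)ᶜ

/-- The projection `ℕⁿ → ℕⁿ⁻¹` dropping the first coordinate. -/
noncomputable def pr {n : ℕ} (β : Fin (n + 1) →₀ ℕ) : Fin n →₀ ℕ :=
  Finsupp.comapDomain Fin.succ β (Fin.succ_injective n).injOn

/-- The embedding `ℕⁿ⁻¹ → ℕⁿ`, putting `0` in the first coordinate. -/
noncomputable def emb {n : ℕ} (α : Fin n →₀ ℕ) : Fin (n + 1) →₀ ℕ :=
  Finsupp.mapDomain Fin.succ α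

/-- `t` is a *product order* restricting to `tb`: `α < β` iff `p(α) < p(β)`, or
`p(α) = p(β)` and `α₁ < β₁`, where `p` drops the first coordinate. -/
def IsProductOrder {n : ℕ} (t : MonomialOrder (Fin (n + 1)))
    (tb : MonomialOrder (Fin n)) : Prop :=
  ∀ α β : Fin (n + 1) →₀ ℕ,
    (t.toSyn α < t.toSyn β ↔
      (tb.toSyn (pr α) < tb.toSyn (pr β) ∨ (pr α = pr β ∧ α 0 < β 0)))

/-- The fiber `A_λ = A ∩ {X₁ = λ}`, regarded as a subvariety of `𝔸ⁿ⁻¹`. -/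
def fiberAt {k : Type*} {n : ℕ} (A : Set (Fin (n + 1) → k)) (lam : k) :
    Set (Fin n → k) :=
  {y | Fin.cons lam y ∈ A}

/-- `A′` is a `d`-dimensional affine subspace of the affine space with coordinates `ι`. -/
def IsAffineDPlane {k : Type*} [Field k] {ι : Type*} [Fintype ι] (d : ℕ)
    (A' : Set (ι → k)) : Prop :=
  ∃ S : AffineSubspace k (ι → k),
    A' = (S : Set (ι → k)) ∧ A'.Nonempty ∧ Module.finrank k S.direction = d

/-- `{X_j : j ∈ J}` is a set of free variables of `A′`. -/
def IsFreeVars {k : Type*} [Field k] {ι : Type*} (A' : Set (ι → k)) (J : Finset ι) :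
    Prop :=
  ∀ v : ι → k, ∃! x, x ∈ A' ∧ ∀ j ∈ J, x j = v j

/-- `{X_j : j ∈ J}` is the set of *minimal* free variables of `A′`. -/
def IsMinFreeVars {k : Type*} [Field k] {ι : Type*} [LinearOrder ι] [DecidableEq ι]
    (A' : Set (ι → k)) (J : Finset ι) : Prop :=
  IsFreeVars A' J ∧ ∀ j ∈ J, ∀ i ∉ J, i < j → ¬ IsFreeVars A' (insert i (J.erase j))


set_option linter.unusedSectionVars false

namespace GFI

noncomputable def econs {n : ℕ} (e : ℕ) (μ : Fin n →₀ ℕ) : Fin (n + 1) →₀ ℕ :=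
  Finsupp.single 0 e + emb μ

@[simp] lemma pr_apply {n : ℕ} (β : Fin (n + 1) →₀ ℕ) (i : Fin n) : pr β i = β i.succ := rfl

@[simp] lemma emb_zero {n : ℕ} (μ : Fin n →₀ ℕ) : emb μ 0 = 0 := by
  apply Finsupp.mapDomain_notin_range
  rintro ⟨i, hi⟩
  exact Fin.succ_ne_zero i hi

@[simp] lemma emb_succ {n : ℕ} (μ : Fin n →₀ ℕ) (i : Fin n) : emb μ i.succ = μ i :=
  Finsupp.mapDomain_apply (Fin.succ_injective n) _ _

@[simp] lemma econs_zero {n : ℕ} (e : ℕ) (μ : Fin n →₀ ℕ) : econs e μ 0 = e := by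
  simp [econs]

@[simp] lemma econs_succ {n : ℕ} (e : ℕ) (μ : Fin n →₀ ℕ) (i : Fin n) :
    econs e μ i.succ = μ i := by
  have : (Finsupp.single (0 : Fin (n+1)) e) i.succ = 0 :=
    Finsupp.single_eq_of_ne' (fun h => Fin.succ_ne_zero i h.symm)
  simp [econs, this]

@[simp] lemma pr_econs {n : ℕ} (e : ℕ) (μ : Fin n →₀ ℕ) : pr (econs e μ) = μ := by
  ext i; simp

lemma econs_eta {n : ℕ} (β : Fin (n + 1) →₀ ℕ) : econs (β 0) (pr β) = β := by
  ext i
  refine Fin.cases ?_ ?_ i <;> simp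

lemma eq_econs_iff {n : ℕ} {α : Fin (n + 1) →₀ ℕ} {e : ℕ} {μ : Fin n →₀ ℕ} :
    α = econs e μ ↔ pr α = μ ∧ α 0 = e := by
  constructor
  · rintro rfl; simp
  · rintro ⟨h1, h2⟩; rw [← econs_eta α, h1, h2]

end GFI

namespace GFI

variable {k : Type*} [CommSemiring k] {n : ℕ}

/-- The isomorphism `k[X₀,…,Xₙ] ≃ (k[t])[X₁,…,Xₙ]` sending `X₀` to the coefficient
variable `t` and `X_{i+1}` to `X i`. -/
noncomputable def psi (k : Type*) [CommSemiring k] (n : ℕ) :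
    MvPolynomial (Fin (n + 1)) k ≃ₐ[k] MvPolynomial (Fin n) (Polynomial k) :=
  (MvPolynomial.renameEquiv k (finSuccEquiv n)).trans (MvPolynomial.optionEquivRight k (Fin n))

@[simp] lemma psi_X_zero : psi k n (X 0) = C Polynomial.X := by
  simp [psi, finSuccEquiv_zero, optionEquivRight_X_none]

@[simp] lemma psi_X_succ (i : Fin n) : psi k n (X i.succ) = X i := by
  simp [psi, finSuccEquiv_succ, optionEquivRight_X_some]

@[simp] lemma psi_C (a : k) : psi k n (C a) = C (Polynomial.C a) := by
  simp [psi, optionEquivRight_C]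

lemma psi_monomial (α : Fin (n + 1) →₀ ℕ) (c : k) :
    psi k n (monomial α c) = monomial (pr α) (Polynomial.monomial (α 0) c) := by
  rw [monomial_eq, monomial_eq]
  rw [Finsupp.prod_fintype _ _ (fun i => pow_zero _), Finsupp.prod_fintype _ _ (fun i => pow_zero _)]
  rw [Fin.prod_univ_succ]
  simp only [map_mul, map_prod, map_pow, psi_X_zero, psi_X_succ, psi_C]
  rw [show (Polynomial.monomial (α 0)) c = Polynomial.C c * Polynomial.X ^ (α 0) from
    by rw [Polynomial.C_mul_X_pow_eq_monomial]]
  rw [map_mul, map_pow]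
  rw [mul_assoc]
  rfl

lemma psi_coeff (F : MvPolynomial (Fin (n + 1)) k) (μ : Fin n →₀ ℕ) (e : ℕ) :
    ((psi k n F).coeff μ).coeff e = F.coeff (econs e μ) := by
  induction F using MvPolynomial.induction_on' with
  | monomial β c =>
    rw [psi_monomial, coeff_monomial, coeff_monomial]
    by_cases h : pr β = μ
    · subst h
      rw [if_pos rfl, Polynomial.coeff_monomial]
      by_cases h2 : β 0 = e
      · rw [if_pos h2, if_pos (eq_econs_iff.mpr ⟨rfl, h2⟩)]
      · rw [if_neg h2, if_neg]
        intro hc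
        exact h2 (eq_econs_iff.mp hc).2
    · rw [if_neg h, Polynomial.coeff_zero, if_neg]
      intro hc
      exact h (eq_econs_iff.mp hc).1
  | add p q hp hq =>
    simp [hp, hq]

end GFI

namespace GFI

variable {k : Type*} [CommSemiring k] {n : ℕ}

lemma pr_mem_support_psi {F : MvPolynomial (Fin (n + 1)) k} {α : Fin (n + 1) →₀ ℕ}
    (h : α ∈ F.support) : pr α ∈ (psi k n F).support := by
  rw [mem_support_iff]
  intro hc
  have := psi_coeff F (pr α) (α 0)
  rw [hc, econs_eta] at this
  simp only [Polynomial.coeff_zero] at this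
  exact (mem_support_iff.mp h) this.symm

lemma exists_mem_support_of_psi {F : MvPolynomial (Fin (n + 1)) k} {μ : Fin n →₀ ℕ}
    (h : μ ∈ (psi k n F).support) : ∃ e, econs e μ ∈ F.support := by
  rw [mem_support_iff] at h
  have h2 : ¬ ∀ e, ((psi k n F).coeff μ).coeff e = (0 : Polynomial k).coeff e := by
    intro hc
    exact h (Polynomial.ext_iff.mpr hc)
  push_neg at h2
  obtain ⟨e, he⟩ := h2
  rw [Polynomial.coeff_zero] at he
  exact ⟨e, mem_support_iff.mpr (by rw [← psi_coeff]; exact he)⟩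

/-- Reduction of coefficients: evaluate the coefficient polynomials at `lam`. -/
noncomputable def fib (lam : k) :
    MvPolynomial (Fin n) (Polynomial k) →+* MvPolynomial (Fin n) k :=
  MvPolynomial.map (Polynomial.evalRingHom lam)

/-- Evaluation of the first variable at `lam`. -/
noncomputable def piLam (lam : k) :
    MvPolynomial (Fin (n + 1)) k →+* MvPolynomial (Fin n) k :=
  (fib lam).comp ((psi k n).toAlgHom.toRingHom)

lemma coeff_fib (lam : k) (G : MvPolynomial (Fin n) (Polynomial k)) (μ : Fin n →₀ ℕ) :
    (fib lam G).coeff μ = (G.coeff μ).eval lam :=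
  coeff_map _ _ _

lemma piLam_apply (lam : k) (F : MvPolynomial (Fin (n + 1)) k) :
    piLam lam F = fib lam (psi k n F) := rfl

lemma coeff_piLam (lam : k) (F : MvPolynomial (Fin (n + 1)) k) (μ : Fin n →₀ ℕ) :
    (piLam lam F).coeff μ = ((psi k n F).coeff μ).eval lam :=
  coeff_map _ _ _

lemma fib_surjective (lam : k) : Function.Surjective (fib (n := n) lam) :=
  MvPolynomial.map_surjective _ (fun a => ⟨Polynomial.C a, by simp⟩)

lemma piLam_surjective (lam : k) : Function.Surjective (piLam (n := n) lam) :=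
  (fib_surjective lam).comp (psi k n).surjective

@[simp] lemma piLam_X_zero (lam : k) : piLam (n := n) lam (X 0) = C lam := by
  rw [piLam_apply, psi_X_zero]
  simp [fib]

@[simp] lemma piLam_X_succ (lam : k) (j : Fin n) : piLam lam (X j.succ) = X j := by
  rw [piLam_apply, psi_X_succ]
  simp [fib]

@[simp] lemma piLam_C (lam : k) (a : k) : piLam (n := n) lam (C a) = C a := by
  rw [piLam_apply, psi_C]
  simp [fib]

lemma eval_piLam (lam : k) (y : Fin n → k) (F : MvPolynomial (Fin (n + 1)) k) :
    eval y (piLam lam F) = eval (Fin.cons lam y) F := by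
  have h : (eval y).comp (piLam lam) = eval (Fin.cons lam y) := by
    apply MvPolynomial.ringHom_ext
    · intro a; simp
    · intro i
      refine Fin.cases ?_ ?_ i
      · simp
      · intro j; simp
  exact RingHom.congr_fun h F

lemma eval_aeval' {σ : Type*} (v : σ → k) (s : σ → MvPolynomial σ k)
    (F : MvPolynomial σ k) :
    eval v (MvPolynomial.aeval s F) = eval (fun i => eval v (s i)) F := by
  have h : (eval v).comp ((MvPolynomial.aeval s : MvPolynomial σ k →ₐ[k] _).toRingHom)
      = eval (fun i => eval v (s i)) := by
    apply MvPolynomial.ringHom_ext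
    · intro a; simp
    · intro i; simp
  exact RingHom.congr_fun h F

end GFI

namespace GFI

variable {k : Type*} [CommRing k] {n : ℕ}

lemma sub_aeval_mem_span {σ : Type*} (s : σ → MvPolynomial σ k) (f : MvPolynomial σ k) :
    f - MvPolynomial.aeval s f ∈ Ideal.span (Set.range fun i => X i - s i) := by
  induction f using MvPolynomial.induction_on with
  | C a => simp [Ideal.zero_mem]
  | add p q hp hq =>
    have : p + q - (MvPolynomial.aeval s) (p + q)
        = (p - MvPolynomial.aeval s p) + (q - MvPolynomial.aeval s q) := by
      rw [map_add]; ring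
    rw [this]
    exact Ideal.add_mem _ hp hq
  | mul_X p i hp =>
    have : p * X i - (MvPolynomial.aeval s) (p * X i)
        = (p - MvPolynomial.aeval s p) * X i + (MvPolynomial.aeval s p) * (X i - s i) := by
      rw [map_mul, aeval_X]; ring
    rw [this]
    exact Ideal.add_mem _ (Ideal.mul_mem_right _ _ hp)
      (Ideal.mul_mem_left _ _ (Ideal.subset_span ⟨i, rfl⟩))

end GFI

namespace GFI

variable {k : Type*} [CommRing k] [IsDomain k] [Infinite k] {n : ℕ}

lemma eval_all_zero {σ : Type*} {f : MvPolynomial σ k} (h : ∀ v : σ → k, eval v f = 0) :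
    f = 0 :=
  MvPolynomial.funext (fun x => by rw [h x, map_zero])

lemma ker_piLam (lam : k) :
    RingHom.ker (piLam (n := n) lam) = Ideal.span {X 0 - C lam} := by
  apply le_antisymm
  · intro F hF
    rw [RingHom.mem_ker] at hF
    set s : Fin (n + 1) → MvPolynomial (Fin (n + 1)) k :=
      Fin.cons (C lam) (fun j : Fin n => X j.succ) with hs
    have htel := sub_aeval_mem_span s F
    have hspan : Ideal.span (Set.range fun i => X i - s i)
        ≤ Ideal.span {X (0 : Fin (n + 1)) - C lam} := by
      rw [Ideal.span_le]
      rintro _ ⟨i, rfl⟩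
      refine Fin.cases ?_ ?_ i
      · simp only [hs, Fin.cons_zero]
        exact Ideal.subset_span rfl
      · intro j
        simp only [hs, Fin.cons_succ, sub_self]
        exact Ideal.zero_mem _
    have haev : MvPolynomial.aeval s F = 0 := by
      apply eval_all_zero
      intro v
      rw [eval_aeval']
      have hv : (fun i => eval v (s i)) = Fin.cons lam (fun j => v j.succ) := by
        funext i
        refine Fin.cases ?_ ?_ i <;> simp [hs]
      rw [hv, ← eval_piLam, hF, map_zero]
    have h2 := hspan htel
    rwa [haev, sub_zero] at h2
  · rw [Ideal.span_le]
    rintro _ rfl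
    rw [SetLike.mem_coe, RingHom.mem_ker, map_sub, piLam_X_zero, piLam_C, sub_self]

end GFI

namespace GFI

variable {k : Type*} [Field k] [Infinite k] {n : ℕ}

lemma plane_fiber_ideal {S : AffineSubspace k (Fin (n + 1) → k)} {P : Set (Fin (n + 1) → k)}
    (hPS : P = (S : Set (Fin (n + 1) → k))) (hne : P.Nonempty) {J : Finset (Fin (n + 1))}
    (hfree : IsFreeVars P J) (h0 : (0 : Fin (n + 1)) ∈ J) (lam : k) :
    vanishingIdeal k (fiberAt P lam) = Ideal.map (piLam lam) (vanishingIdeal k P) := by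
  classical
  obtain ⟨p₀, hp₀⟩ := hne
  -- the points `xj j` and direction vectors `w j`
  have hxj : ∀ j : Fin (n + 1), ∃ x, (x ∈ P ∧ ∀ j' ∈ J, x j' =
      (fun i => p₀ i + (if i = j then 1 else 0)) j') := fun j => (hfree _).exists
  set xj : Fin (n + 1) → (Fin (n + 1) → k) := fun j => (hxj j).choose with hxjdef
  have hxjP : ∀ j, xj j ∈ P := fun j => (hxj j).choose_spec.1
  have hxjc : ∀ j, ∀ j' ∈ J, xj j j' = p₀ j' + (if j' = j then 1 else 0) :=
    fun j => (hxj j).choose_spec.2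
  set w : Fin (n + 1) → (Fin (n + 1) → k) := fun j => xj j - p₀ with hwdef
  have hw : ∀ j, ∀ j' ∈ J, w j j' = if j' = j then 1 else 0 := by
    intro j j' hj'
    simp only [hwdef, Pi.sub_apply, hxjc j j' hj']
    ring
  have hwdir : ∀ j, w j ∈ S.direction := by
    intro j
    have := AffineSubspace.vsub_mem_direction (hPS ▸ hxjP j) (hPS ▸ hp₀)
    simpa [hwdef] using this
  -- the affine retraction Φ
  set Phi : (Fin (n + 1) → k) → (Fin (n + 1) → k) :=
    fun v i => p₀ i + ∑ j ∈ J, (v j - p₀ j) * w j i with hPhidef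
  have hPhiP : ∀ v, Phi v ∈ P := by
    intro v
    have hdir : (fun i => ∑ j ∈ J, (v j - p₀ j) * w j i) ∈ S.direction := by
      have : (fun i => ∑ j ∈ J, (v j - p₀ j) * w j i)
          = ∑ j ∈ J, (v j - p₀ j) • w j := by
        funext i
        simp [Finset.sum_apply]
      rw [this]
      exact Submodule.sum_mem _ (fun j _ => Submodule.smul_mem _ _ (hwdir j))
    have := AffineSubspace.vadd_mem_of_mem_direction hdir (hPS ▸ hp₀)
    rw [hPS, SetLike.mem_coe]
    convert this using 1
    funext i
    simp [hPhidef, vadd_eq_add]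
    ring
  have hPhiJ : ∀ v, ∀ j' ∈ J, Phi v j' = v j' := by
    intro v j' hj'
    simp only [hPhidef]
    rw [Finset.sum_eq_single j']
    · rw [hw j' j' hj', if_pos rfl]; ring
    · intro j hj hjne
      have : ¬ (j' = j) := fun h => hjne h.symm
      rw [hw j j' hj', if_neg this]; ring
    · intro h; exact absurd hj' h
  have hPhix : ∀ x ∈ P, Phi x = x := by
    intro x hx
    obtain ⟨y, hy, hyu⟩ := hfree x
    have h1 : Phi x = y := hyu _ ⟨hPhiP x, fun j hj => hPhiJ x j hj⟩
    have h2 : x = y := hyu _ ⟨hx, fun j hj => rfl⟩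
    rw [h1, ← h2]
  have hPhi0 : ∀ v, Phi v 0 = v 0 := fun v => hPhiJ v 0 h0
  -- the polynomial substitution
  set q : Fin (n + 1) → MvPolynomial (Fin (n + 1)) k :=
    fun i => C (p₀ i) + ∑ j ∈ J, (X j - C (p₀ j)) * C (w j i) with hqdef
  have hqeval : ∀ (v : Fin (n + 1) → k) i, eval v (q i) = Phi v i := by
    intro v i
    simp [hqdef, hPhidef]
  -- generators vanish on P
  have hgen : ∀ i, (X i - q i) ∈ vanishingIdeal k P := by
    intro i
    rw [mem_vanishingIdeal_iff]
    intro x hx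
    rw [aeval_eq_eval, map_sub, eval_X, hqeval, hPhix x hx, sub_self]
  have hgenspan : Ideal.span (Set.range fun i => X i - q i) ≤ vanishingIdeal k P := by
    rw [Ideal.span_le]
    rintro _ ⟨i, rfl⟩
    exact hgen i
  -- main proof
  apply le_antisymm
  · intro f hf
    set F : MvPolynomial (Fin (n + 1)) k := rename Fin.succ f with hFdef
    have hπρ : piLam lam F = f := by
      have h : (piLam (n := n) lam).comp (rename (R := k) Fin.succ).toRingHom
          = RingHom.id _ := by
        apply MvPolynomial.ringHom_ext
        · intro a; simp
        · intro j; simp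
      calc piLam lam F = ((piLam (n := n) lam).comp (rename (R := k) Fin.succ).toRingHom) f :=
            rfl
        _ = f := by rw [h]; rfl
    have hH : F - MvPolynomial.aeval q F ∈ vanishingIdeal k P :=
      hgenspan (sub_aeval_mem_span q F)
    have hG : piLam lam (MvPolynomial.aeval q F) = 0 := by
      apply eval_all_zero
      intro y
      rw [eval_piLam, eval_aeval']
      have : (fun i => eval (Fin.cons lam y) (q i)) = Phi (Fin.cons lam y) := by
        funext i; exact hqeval _ i
      rw [this, hFdef, eval_rename]
      have hmem : (Phi (Fin.cons lam y) ∘ Fin.succ) ∈ fiberAt P lam := by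
        have hc : Fin.cons lam (Phi (Fin.cons lam y) ∘ Fin.succ) = Phi (Fin.cons lam y) := by
          have h0' : Phi (Fin.cons lam y) 0 = lam := by
            rw [hPhi0]; simp
          funext i
          refine Fin.cases ?_ ?_ i
          · rw [Fin.cons_zero, h0']
          · intro j; rw [Fin.cons_succ]; rfl
        show Fin.cons lam _ ∈ P
        rw [hc]
        exact hPhiP _
      exact hf _ hmem
    have : f = piLam lam (F - MvPolynomial.aeval q F) := by
      rw [map_sub, hG, sub_zero, hπρ]
    rw [this]
    exact Ideal.mem_map_of_mem _ hH
  · intro g hg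
    rw [Ideal.mem_map_iff_of_surjective _ (piLam_surjective lam)] at hg
    obtain ⟨F, hF, rfl⟩ := hg
    rw [mem_vanishingIdeal_iff]
    intro y hy
    rw [aeval_eq_eval, eval_piLam, ← aeval_eq_eval]
    exact hF _ hy

end GFI

namespace GFI

section Key

variable {k : Type*} [Field k] [Infinite k] {n : ℕ}

lemma piLam_rename (lam : k) (f : MvPolynomial (Fin n) k) :
    piLam lam (rename Fin.succ f) = f := by
  have h : (piLam (n := n) lam).comp (rename (R := k) Fin.succ).toRingHom
      = RingHom.id _ := by
    apply MvPolynomial.ringHom_ext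
    · intro a; simp
    · intro j; simp
  calc piLam lam (rename Fin.succ f)
      = ((piLam (n := n) lam).comp (rename (R := k) Fin.succ).toRingHom) f := rfl
    _ = f := by rw [h]; rfl

lemma map_piLam_le (lam : k) (A : Set (Fin (n + 1) → k)) :
    Ideal.map (piLam lam) (vanishingIdeal k A) ≤ vanishingIdeal k (fiberAt A lam) := by
  intro g hg
  rw [Ideal.mem_map_iff_of_surjective _ (piLam_surjective lam)] at hg
  obtain ⟨F, hF, rfl⟩ := hg
  rw [mem_vanishingIdeal_iff]
  intro y hy
  rw [aeval_eq_eval, eval_piLam, ← aeval_eq_eval]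
  exact hF _ hy

lemma fiberAt_iUnion {mm : ℕ} (P : Fin mm → Set (Fin (n + 1) → k)) (lam : k) :
    fiberAt (⋃ c, P c) lam = ⋃ c, fiberAt (P c) lam := by
  ext y
  simp [fiberAt, Set.mem_iUnion]

lemma key_lemma {mm : ℕ} (P : Fin mm → Set (Fin (n + 1) → k))
    (hplane : ∀ c, ∃ S : AffineSubspace k (Fin (n + 1) → k), P c = ↑S)
    (hne : ∀ c, (P c).Nonempty)
    (Jc : Fin mm → Finset (Fin (n + 1)))
    (hfree : ∀ c, IsFreeVars (P c) (Jc c)) (h0 : ∀ c, (0 : Fin (n + 1)) ∈ Jc c)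
    (A : Set (Fin (n + 1) → k)) (hA : A = ⋃ c, P c) :
    ∃ B : Set k, B.Finite ∧ ∀ lam ∉ B,
      vanishingIdeal k (fiberAt A lam) = Ideal.map (piLam lam) (vanishingIdeal k A) := by
  classical
  set R := MvPolynomial (Fin (n + 1)) k with hR
  set Ic : Fin mm → Ideal R := fun c => vanishingIdeal k (P c) with hIc
  -- the module Q measuring the failure of intersection/specialization commuting
  set W : Submodule R (Fin mm → R) :=
    { carrier := {r | ∃ s : R, ∀ c, r c - s ∈ Ic c}
      add_mem' := by
        rintro a b ⟨s, hs⟩ ⟨u, hu⟩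
        refine ⟨s + u, fun c => ?_⟩
        have : (a + b) c - (s + u) = (a c - s) + (b c - u) := by
          simp only [Pi.add_apply]; ring
        rw [this]
        exact Ideal.add_mem _ (hs c) (hu c)
      zero_mem' := ⟨0, fun c => by simp⟩
      smul_mem' := by
        rintro r a ⟨s, hs⟩
        refine ⟨r * s, fun c => ?_⟩
        have : (r • a) c - r * s = r * (a c - s) := by
          simp only [Pi.smul_apply, smul_eq_mul]; ring
        rw [this]
        exact Ideal.mul_mem_left _ _ (hs c) } with hW
  set Q := (Fin mm → R) ⧸ W with hQ
  -- the torsion submodule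
  set N : Submodule R Q :=
    { carrier := {q | ∃ g : Polynomial k, g ≠ 0 ∧ (Polynomial.aeval (X 0 : R) g) • q = 0}
      add_mem' := by
        rintro a b ⟨g, hg, hga⟩ ⟨g', hg', hg'b⟩
        refine ⟨g * g', mul_ne_zero hg hg', ?_⟩
        rw [map_mul, smul_add]
        have h1 : (Polynomial.aeval (X 0 : R) g * Polynomial.aeval (X 0 : R) g') • a = 0 := by
          rw [mul_comm, mul_smul, hga, smul_zero]
        have h2 : (Polynomial.aeval (X 0 : R) g * Polynomial.aeval (X 0 : R) g') • b = 0 := by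
          rw [mul_smul, hg'b, smul_zero]
        rw [h1, h2, add_zero]
      zero_mem' := ⟨1, one_ne_zero, by rw [smul_zero]⟩
      smul_mem' := by
        rintro r a ⟨g, hg, hga⟩
        exact ⟨g, hg, by rw [smul_comm, hga, smul_zero]⟩ } with hN
  -- N is finitely generated; get a common annihilator
  have hNfg : N.FG := IsNoetherian.noetherian N
  obtain ⟨s, hsN⟩ := hNfg
  have hsub : (s : Set Q) ⊆ N := by
    rw [← hsN]; exact Submodule.subset_span
  have hchoice : ∀ x ∈ (s : Set Q), ∃ g : Polynomial k, g ≠ 0 ∧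
      (Polynomial.aeval (X 0 : R) g) • x = 0 := fun x hx => hsub hx
  choose gfun hgfun0 hgfunkill using hchoice
  set gbig : Polynomial k := ∏ x ∈ s.attach, gfun x (x.2) with hgbig
  have hgbig0 : gbig ≠ 0 := Finset.prod_ne_zero_iff.mpr (fun x _ => hgfun0 x x.2)
  have hkill : ∀ q ∈ N, (Polynomial.aeval (X 0 : R) gbig) • q = 0 := by
    intro q hq
    rw [← hsN] at hq
    induction hq using Submodule.span_induction with
    | mem x hx =>
      have hxs : x ∈ s.attach.image Subtype.val := by simpa using hx
      obtain ⟨⟨x', hx'⟩, hx'mem, rfl⟩ := Finset.mem_image.mp hxs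
      rw [hgbig, ← Finset.mul_prod_erase _ _ hx'mem, map_mul, mul_comm, mul_smul,
        hgfunkill x' hx', smul_zero]
    | zero => rw [smul_zero]
    | add a b _ _ ha hb => rw [smul_add, ha, hb, add_zero]
    | smul r a _ ha => rw [smul_comm, ha, smul_zero]
  -- the bad set
  refine ⟨{lam | Polynomial.eval lam gbig = 0}, Polynomial.finite_setOf_isRoot hgbig0, ?_⟩
  intro lam hlam
  simp only [Set.mem_setOf_eq] at hlam
  apply le_antisymm
  · -- the hard inclusion
    intro f hf
    have hfc : ∀ c, f ∈ Ideal.map (piLam lam) (Ic c) := by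
      intro c
      obtain ⟨S, hS⟩ := hplane c
      rw [← plane_fiber_ideal hS (hne c) (hfree c) (h0 c) lam]
      refine vanishingIdeal_anti_mono ?_ hf
      intro y hy
      rw [hA, fiberAt_iUnion]
      exact Set.mem_iUnion.mpr ⟨c, hy⟩
    have hFc : ∀ c, ∃ F, F ∈ Ic c ∧ piLam lam F = f := fun c =>
      (Ideal.mem_map_iff_of_surjective _ (piLam_surjective lam)).mp (hfc c)
    choose Fc hFcI hFcπ using hFc
    set ρf : R := rename Fin.succ f with hρf
    have hb : ∀ c, ∃ b : R, b * (X 0 - C lam) = ρf - Fc c := by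
      intro c
      rw [← Ideal.mem_span_singleton', ← ker_piLam lam, RingHom.mem_ker, map_sub,
        piLam_rename, hFcπ c, sub_self]
    choose b hbspec using hb
    -- (X 0 - C lam) • mk b = 0 in Q
    have hq0 : ((X 0 - C lam : R) • (Submodule.Quotient.mk b : Q) : Q) = 0 := by
      rw [← Submodule.Quotient.mk_smul, Submodule.Quotient.mk_eq_zero]
      refine ⟨ρf, fun c => ?_⟩
      have : ((X 0 - C lam : R) • b) c - ρf = -(Fc c) := by
        rw [Pi.smul_apply, smul_eq_mul, mul_comm, hbspec c]; ring
      rw [this]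
      exact neg_mem (hFcI c)
    -- conclude mk b = 0
    have hqzero : (Submodule.Quotient.mk b : Q) = 0 := by
      by_contra hq
      have hqN : (Submodule.Quotient.mk b : Q) ∈ N := by
        refine ⟨Polynomial.X - Polynomial.C lam, Polynomial.X_sub_C_ne_zero lam, ?_⟩
        rw [map_sub, Polynomial.aeval_X, Polynomial.aeval_C]
        exact hq0
      have hk := hkill _ hqN
      obtain ⟨u, hu⟩ := Polynomial.X_sub_C_dvd_sub_C_eval (a := lam) (p := gbig)
      have hsplit : Polynomial.aeval (X 0 : R) gbig
          = (X 0 - C lam) * Polynomial.aeval (X 0 : R) u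
            + C (Polynomial.eval lam gbig) := by
        have := congrArg (Polynomial.aeval (X 0 : R)) hu
        rw [map_sub, map_mul, map_sub, Polynomial.aeval_X, Polynomial.aeval_C,
          Polynomial.aeval_C] at this
        have halg : (algebraMap k R) lam = C lam := rfl
        have halg2 : (algebraMap k R) (Polynomial.eval lam gbig)
            = C (Polynomial.eval lam gbig) := rfl
        rw [halg, halg2] at this
        linear_combination this
      rw [hsplit, add_smul, mul_comm, mul_smul, hq0, smul_zero, zero_add] at hk
      -- C e • q = 0 with e ≠ 0
      apply hq
      have : (Submodule.Quotient.mk b : Q)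
          = (C (Polynomial.eval lam gbig)⁻¹ : R) • ((C (Polynomial.eval lam gbig) : R)
              • (Submodule.Quotient.mk b : Q)) := by
        rw [← mul_smul, ← map_mul, inv_mul_cancel₀ hlam, map_one, one_smul]
      rw [this, hk, smul_zero]
    rw [Submodule.Quotient.mk_eq_zero] at hqzero
    obtain ⟨sq, hsq⟩ := hqzero
    set G : R := ρf - (X 0 - C lam) * sq with hG
    have hGA : G ∈ vanishingIdeal k A := by
      rw [mem_vanishingIdeal_iff]
      intro x hx
      rw [hA] at hx
      obtain ⟨c, hc⟩ := Set.mem_iUnion.mp hx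
      have hGc : G ∈ Ic c := by
        have : G = Fc c + (X 0 - C lam) * (b c - sq) := by
          rw [hG]; linear_combination - hbspec c
        rw [this]
        exact Ideal.add_mem _ (hFcI c) (Ideal.mul_mem_left _ _ (hsq c))
      exact hGc x hc
    have hπG : piLam lam G = f := by
      rw [hG, map_sub, map_mul, map_sub, piLam_X_zero, piLam_C, sub_self, zero_mul,
        sub_zero, piLam_rename]
    rw [← hπG]
    exact Ideal.mem_map_of_mem _ hGA
  · exact map_piLam_le lam A

end Key

end GFI

namespace GFI

section Orders

variable {σ : Type*} {k : Type*} [Field k]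

/-- `expC` is an upper set: leading exponents are closed under adding monomials. -/
lemma expC_add {m : MonomialOrder σ} {I : Ideal (MvPolynomial σ k)}
    {β : σ →₀ ℕ} (hβ : β ∈ expC m I) (ν : σ →₀ ℕ) : ν + β ∈ expC m I := by
  obtain ⟨f, hfI, hfs, hfm⟩ := hβ
  refine ⟨monomial ν 1 * f, Ideal.mul_mem_left _ _ hfI, ?_, ?_⟩
  · rw [mem_support_iff, coeff_monomial_mul, one_mul]
    exact mem_support_iff.mp hfs
  · intro α' hα' hne
    rw [mem_support_iff, coeff_monomial_mul'] at hα'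
    by_cases hle : ν ≤ α'
    · rw [if_pos hle, one_mul] at hα'
      have hα : α' - ν ∈ f.support := mem_support_iff.mpr hα'
      have hrec : ν + (α' - ν) = α' := add_tsub_cancel_of_le hle
      have hne2 : α' - ν ≠ β := by
        intro hc
        exact hne (by rw [← hrec, hc])
      have := hfm _ hα hne2
      calc m.toSyn α' = m.toSyn ν + m.toSyn (α' - ν) := by rw [← map_add, hrec]
        _ < m.toSyn ν + m.toSyn β := by exact (add_lt_add_iff_left _).mpr this
        _ = m.toSyn (ν + β) := by rw [← map_add]
    · rw [if_neg hle] at hα'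
      exact absurd rfl hα'

end Orders

section PartOne

variable {k : Type*} [Field k] [Infinite k] {n : ℕ}

lemma part_one {t : MonomialOrder (Fin (n + 1))} {tb : MonomialOrder (Fin n)}
    (hprod : IsProductOrder t tb) (A : Set (Fin (n + 1) → k))
    (U : Set k) (hUopen : Uᶜ.Finite)
    {β : Fin (n + 1) →₀ ℕ} (hβ : β ∈ expC t (vanishingIdeal k A)) :
    ∃ lam ∈ U, pr β ∈ expC tb (vanishingIdeal k (fiberAt A lam)) := by
  obtain ⟨F, hFI, hFs, hFm⟩ := hβ
  set g : Polynomial k := (psi k n F).coeff (pr β) with hg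
  have hg0 : g ≠ 0 := by
    intro hc
    have := psi_coeff F (pr β) (β 0)
    rw [← hg, hc, econs_eta, Polynomial.coeff_zero] at this
    exact mem_support_iff.mp hFs this.symm
  have hbad : (Uᶜ ∪ {lam | Polynomial.eval lam g = 0}).Finite :=
    hUopen.union (Polynomial.finite_setOf_isRoot hg0)
  obtain ⟨lam, hlam⟩ := hbad.infinite_compl.nonempty
  rw [Set.mem_compl_iff, Set.mem_union, not_or, Set.notMem_compl_iff] at hlam
  obtain ⟨hlamU, hlamg⟩ := hlam
  simp only [Set.mem_setOf_eq] at hlamg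
  refine ⟨lam, hlamU, piLam lam F, ?_, ?_, ?_⟩
  · rw [mem_vanishingIdeal_iff]
    intro y hy
    rw [aeval_eq_eval, eval_piLam, ← aeval_eq_eval]
    exact hFI _ hy
  · rw [mem_support_iff, coeff_piLam]
    exact hlamg
  · intro μ hμ hne
    rw [mem_support_iff, coeff_piLam] at hμ
    have hμs : μ ∈ (psi k n F).support := by
      rw [mem_support_iff]
      intro hc
      rw [hc, Polynomial.eval_zero] at hμ
      exact hμ rfl
    obtain ⟨e, he⟩ := exists_mem_support_of_psi hμs
    have hne2 : econs e μ ≠ β := by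
      intro hc
      exact hne (by rw [← pr_econs e μ, hc])
    have hlt := hFm _ he hne2
    rcases (hprod _ _).mp hlt with h | h
    · rwa [pr_econs] at h
    · exact absurd (by rw [← pr_econs e μ, h.1]) hne

end PartOne

end GFI

namespace GFI

section Columns

variable {k : Type*} [Field k] {n : ℕ}

variable (tb : MonomialOrder (Fin n)) (J : Ideal (MvPolynomial (Fin n) (Polynomial k)))

/-- The ideal of `ν`-column leading coefficients of elements of `J` whose columns are
all `tb`-below `ν`. -/
noncomputable def colIdeal (ν : Fin n →₀ ℕ) : Ideal (Polynomial k) where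
  carrier := {g | g = 0 ∨ ∃ G ∈ J, G.coeff ν = g ∧
    ∀ μ ∈ G.support, μ ≠ ν → tb.toSyn μ < tb.toSyn ν}
  zero_mem' := Or.inl rfl
  add_mem' := by
    rintro a b (rfl | ⟨G, hGJ, hGc, hGs⟩) hb
    · simpa using hb
    rcases hb with rfl | ⟨G', hG'J, hG'c, hG's⟩
    · rw [add_zero]
      exact Or.inr ⟨G, hGJ, hGc, hGs⟩
    · refine Or.inr ⟨G + G', Ideal.add_mem _ hGJ hG'J, by rw [coeff_add, hGc, hG'c], ?_⟩
      intro μ hμ hne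
      have : μ ∈ G.support ∪ G'.support := MvPolynomial.support_add hμ
      rcases Finset.mem_union.mp this with h | h
      · exact hGs μ h hne
      · exact hG's μ h hne
  smul_mem' := by
    rintro c x (rfl | ⟨G, hGJ, hGc, hGs⟩)
    · exact Or.inl (by simp)
    · refine Or.inr ⟨C c * G, Ideal.mul_mem_left _ _ hGJ, by rw [coeff_C_mul, hGc]; rfl, ?_⟩
      intro μ hμ hne
      apply hGs μ _ hne
      rw [mem_support_iff] at hμ ⊢
      intro hzero
      rw [coeff_C_mul, hzero, mul_zero] at hμ
      exact hμ rfl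

lemma colIdeal_mono {ν ν' : Fin n →₀ ℕ} (h : ν ≤ ν') :
    colIdeal tb J ν ≤ colIdeal tb J ν' := by
  rintro g (rfl | ⟨G, hGJ, hGc, hGs⟩)
  · exact Or.inl rfl
  refine Or.inr ⟨monomial (ν' - ν) 1 * G, Ideal.mul_mem_left _ _ hGJ, ?_, ?_⟩
  · have e1 : coeff ((ν' - ν) + ν) (monomial (ν' - ν) (1 : Polynomial k) * G)
        = 1 * coeff ν G := coeff_monomial_mul _ _ _ _
    rw [tsub_add_cancel_of_le h] at e1
    rw [e1, one_mul, hGc]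
  · intro μ' hμ' hne
    rw [mem_support_iff, coeff_monomial_mul'] at hμ'
    by_cases hle : ν' - ν ≤ μ'
    · rw [if_pos hle, one_mul] at hμ'
      have hμ : μ' - (ν' - ν) ∈ G.support := mem_support_iff.mpr hμ'
      have hrec : (ν' - ν) + (μ' - (ν' - ν)) = μ' := add_tsub_cancel_of_le hle
      have hne2 : μ' - (ν' - ν) ≠ ν := by
        intro hc
        apply hne
        rw [← hrec, hc, tsub_add_cancel_of_le h]
      have hlt := hGs _ hμ hne2
      calc tb.toSyn μ' = tb.toSyn (ν' - ν) + tb.toSyn (μ' - (ν' - ν)) := by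
            rw [← map_add, hrec]
        _ < tb.toSyn (ν' - ν) + tb.toSyn ν := (add_lt_add_iff_left _).mpr hlt
        _ = tb.toSyn ν' := by rw [← map_add, tsub_add_cancel_of_le h]
    · rw [if_neg hle] at hμ'
      exact absurd rfl hμ'

/-- A generator of the column ideal. -/
noncomputable def hgen (ν : Fin n →₀ ℕ) : Polynomial k :=
  (IsPrincipalIdealRing.principal (colIdeal tb J ν)).generator

lemma colIdeal_eq_span (ν : Fin n →₀ ℕ) :
    colIdeal tb J ν = Ideal.span {hgen tb J ν} := by
  rw [hgen, Ideal.span_singleton_generator]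

lemma hgen_mem (ν : Fin n →₀ ℕ) : hgen tb J ν ∈ colIdeal tb J ν := by
  rw [colIdeal_eq_span]
  exact Ideal.subset_span rfl

lemma hgen_dvd (ν : Fin n →₀ ℕ) {g : Polynomial k} (hg : g ∈ colIdeal tb J ν) :
    hgen tb J ν ∣ g := by
  rw [colIdeal_eq_span, Ideal.mem_span_singleton] at hg
  exact hg

lemma hgen_ne_zero {ν : Fin n →₀ ℕ} (h : colIdeal tb J ν ≠ ⊥) : hgen tb J ν ≠ 0 := by
  intro hc
  apply h
  rw [colIdeal_eq_span, hc, Ideal.span_singleton_eq_bot.mpr rfl]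

/-- The union of the root sets of all the column-ideal generators is finite. -/
lemma badRoots_finite :
    {lam : k | ∃ ν, colIdeal tb J ν ≠ ⊥ ∧ Polynomial.eval lam (hgen tb J ν) = 0}.Finite := by
  classical
  set Lam : Set (Fin n →₀ ℕ) := {ν | colIdeal tb J ν ≠ ⊥} with hLam
  set Min : Set (Fin n →₀ ℕ) := {m | m ∈ Lam ∧ ∀ m' ∈ Lam, m' ≤ m → m' = m} with hMin
  have hcover : ∀ ν ∈ Lam, ∃ m ∈ Min, m ≤ ν := by
    intro ν hν
    set S' : Set (Fin n →₀ ℕ) := {m | m ∈ Lam ∧ m ≤ ν} with hS'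
    have hS'wf : S'.IsWF := (Set.isPWO_of_wellQuasiOrderedLE S').isWF
    have hne' : S'.Nonempty := ⟨ν, hν, le_refl ν⟩
    have hmS : hS'wf.min hne' ∈ S' := hS'wf.min_mem hne'
    refine ⟨hS'wf.min hne', ⟨hmS.1, ?_⟩, hmS.2⟩
    intro m' hm' hle
    by_contra hne
    exact hS'wf.not_lt_min hne' (⟨hm', le_trans hle hmS.2⟩ : m' ∈ S')
      (lt_of_le_of_ne hle hne)
  have hMinfin : Min.Finite := by
    have hanti : IsAntichain (· ≤ ·) Min := by
      intro a ha b hb hne hle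
      exact hne (hb.2 a ha.1 hle)
    exact hanti.finite_of_partiallyWellOrderedOn (Set.isPWO_of_wellQuasiOrderedLE Min)
  have hsub : {lam : k | ∃ ν, colIdeal tb J ν ≠ ⊥ ∧ Polynomial.eval lam (hgen tb J ν) = 0}
      ⊆ ⋃ m ∈ Min, {lam : k | Polynomial.eval lam (hgen tb J m) = 0} := by
    rintro lam ⟨ν, hν, hroot⟩
    obtain ⟨m, hm, hle⟩ := hcover ν hν
    obtain ⟨u, hu⟩ := hgen_dvd tb J ν (colIdeal_mono tb J hle (hgen_mem tb J m))
    refine Set.mem_biUnion hm ?_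
    show Polynomial.eval lam (hgen tb J m) = 0
    rw [hu, Polynomial.eval_mul, hroot, zero_mul]
  refine Set.Finite.subset ?_ hsub
  apply Set.Finite.biUnion hMinfin
  intro m hm
  exact Polynomial.finite_setOf_isRoot (hgen_ne_zero tb J hm.1)

end Columns

end GFI

namespace GFI

section TopCol

variable {k : Type*} [Field k] {n : ℕ} (tb : MonomialOrder (Fin n))

/-- The `tb`-largest column (exponent in the `X` variables) of a polynomial in
`(k[t])[X₁,…,Xₙ]`. -/
noncomputable def topCol (G : MvPolynomial (Fin n) (Polynomial k)) : Fin n →₀ ℕ :=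
  if hG : G.support.Nonempty then
    tb.toSyn.symm ((G.support.image tb.toSyn).max' (hG.image _))
  else 0

lemma topCol_mem {G : MvPolynomial (Fin n) (Polynomial k)} (hG : G ≠ 0) :
    topCol tb G ∈ G.support := by
  have hs : G.support.Nonempty := support_nonempty.mpr hG
  rw [topCol, dif_pos hs]
  obtain ⟨μ, hμ, he⟩ := Finset.mem_image.mp
    ((G.support.image tb.toSyn).max'_mem (hs.image _))
  rw [← he, AddEquiv.symm_apply_apply]
  exact hμ

lemma le_topCol {G : MvPolynomial (Fin n) (Polynomial k)} {μ : Fin n →₀ ℕ}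
    (hG : G ≠ 0) (hμ : μ ∈ G.support) : tb.toSyn μ ≤ tb.toSyn (topCol tb G) := by
  have hs : G.support.Nonempty := support_nonempty.mpr hG
  rw [topCol, dif_pos hs, AddEquiv.apply_symm_apply]
  exact Finset.le_max' _ _ (Finset.mem_image_of_mem _ hμ)

end TopCol

section LeadOfCol

variable {k : Type*} [Field k] {n : ℕ}
variable {t : MonomialOrder (Fin (n + 1))} {tb : MonomialOrder (Fin n)}

/-- From a column-ideal witness, produce a leading exponent of the corresponding
element of the original ideal: the leading exponent is `econs (deg g) ν`. -/
lemma lead_of_col (hprod : IsProductOrder t tb)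
    {G : MvPolynomial (Fin n) (Polynomial k)} {g : Polynomial k} {ν : Fin n →₀ ℕ}
    (hcoeff : G.coeff ν = g) (hg0 : g ≠ 0)
    (hsup : ∀ μ ∈ G.support, μ ≠ ν → tb.toSyn μ < tb.toSyn ν) :
    IsLeadExp t ((psi k n).symm G) (econs g.natDegree ν) := by
  set F := (psi k n).symm G with hF
  have hpsiF : psi k n F = G := (psi k n).apply_symm_apply G
  constructor
  · rw [mem_support_iff]
    have := psi_coeff F ν g.natDegree
    rw [hpsiF, hcoeff] at this
    rw [← this]
    exact Polynomial.leadingCoeff_ne_zero.mpr hg0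
  · intro α hα hne
    rw [mem_support_iff] at hα
    have hcoeffα := psi_coeff F (pr α) (α 0)
    rw [hpsiF, econs_eta] at hcoeffα
    have hGα : (G.coeff (pr α)).coeff (α 0) ≠ 0 := by rw [hcoeffα]; exact hα
    have hprα : pr α ∈ G.support := by
      rw [mem_support_iff]
      intro hc
      rw [hc, Polynomial.coeff_zero] at hGα
      exact hGα rfl
    by_cases hpr : pr α = ν
    · -- same column: compare `t`-degrees in the first variable
      have hα0 : α 0 ≤ g.natDegree := by
        apply Polynomial.le_natDegree_of_ne_zero
        rw [← hcoeff, ← hpr]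
        exact hGα
      have hα0ne : α 0 ≠ g.natDegree := by
        intro hc
        apply hne
        rw [eq_econs_iff]
        exact ⟨hpr, hc⟩
      have hlt : α 0 < g.natDegree := lt_of_le_of_ne hα0 hα0ne
      rw [hprod]
      right
      refine ⟨by rw [hpr, pr_econs], ?_⟩
      rw [econs_zero]
      exact hlt
    · rw [hprod]
      left
      rw [pr_econs]
      exact hsup _ hprα hpr

end LeadOfCol

end GFI

namespace GFI

section PartTwo

variable {k : Type*} [Field k] [Infinite k] {n : ℕ}

lemma part_two {t : MonomialOrder (Fin (n + 1))} {tb : MonomialOrder (Fin n)}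
    (hprod : IsProductOrder t tb)
    {mm : ℕ} (P : Fin mm → Set (Fin (n + 1) → k))
    (hplane : ∀ c, ∃ S : AffineSubspace k (Fin (n + 1) → k), P c = ↑S)
    (hnem : ∀ c, (P c).Nonempty)
    (Jc : Fin mm → Finset (Fin (n + 1)))
    (hfree : ∀ c, IsFreeVars (P c) (Jc c)) (h0 : ∀ c, (0 : Fin (n + 1)) ∈ Jc c)
    (A : Set (Fin (n + 1) → k)) (hA : A = ⋃ c, P c)
    (U : Set k) (hUopen : Uᶜ.Finite)
    (δ : Set (Fin n →₀ ℕ))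
    (hδ : ∀ lam ∈ U, expD tb (vanishingIdeal k (fiberAt A lam)) = δ)
    (γ : Fin (n + 1) →₀ ℕ)
    (Hc : ∀ c : ℕ, γ + Finsupp.single 0 c ∈ expD t (vanishingIdeal k A)) :
    pr γ ∈ δ := by
  classical
  set I : Ideal (MvPolynomial (Fin (n + 1)) k) := vanishingIdeal k A with hI
  set Jid : Ideal (MvPolynomial (Fin n) (Polynomial k)) :=
    Ideal.comap ((psi k n).symm.toAlgHom.toRingHom) I with hJid
  have hJmem : ∀ G, G ∈ Jid ↔ (psi k n).symm G ∈ I := by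
    intro G
    rw [hJid, Ideal.mem_comap]
    rfl
  set βs := pr γ with hβs
  -- Step 1: the `βs`-column ideal is trivial
  have hLbot : colIdeal tb Jid βs = ⊥ := by
    by_contra hc
    obtain ⟨g, hgmem, hg0⟩ := (Submodule.ne_bot_iff _).mp hc
    rcases hgmem with rfl | ⟨G, hGJ, hGc, hGs⟩
    · exact hg0 rfl
    have hlead := lead_of_col hprod hGc hg0 hGs
    have hexpC : econs g.natDegree βs ∈ expC t I := ⟨_, (hJmem G).mp hGJ, hlead⟩
    have h2 := expC_add hexpC (Finsupp.single 0 (γ 0))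
    have heq : Finsupp.single 0 (γ 0) + econs g.natDegree βs
        = γ + Finsupp.single 0 g.natDegree := by
      ext i
      refine Fin.cases ?_ ?_ i
      · rw [Finsupp.add_apply, Finsupp.add_apply, Finsupp.single_eq_same,
          Finsupp.single_eq_same, econs_zero, add_comm]
      · intro j
        rw [Finsupp.add_apply, Finsupp.add_apply, econs_succ,
          Finsupp.single_eq_of_ne' (fun h => Fin.succ_ne_zero j h.symm),
          Finsupp.single_eq_of_ne' (fun h => Fin.succ_ne_zero j h.symm),
          zero_add, add_zero]
        rfl
    rw [heq] at h2
    exact Hc g.natDegree h2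
  -- Step 2: find a good `lam`
  obtain ⟨B1, hB1fin, hB1⟩ := key_lemma P hplane hnem Jc hfree h0 A hA
  have hB2fin := badRoots_finite tb Jid
  have hbig : (Uᶜ ∪ (B1 ∪ {lam : k | ∃ ν, colIdeal tb Jid ν ≠ ⊥ ∧
      Polynomial.eval lam (hgen tb Jid ν) = 0})).Finite :=
    hUopen.union (hB1fin.union hB2fin)
  obtain ⟨lam, hlam⟩ := hbig.infinite_compl.nonempty
  rw [Set.mem_compl_iff, Set.mem_union, Set.mem_union] at hlam
  push_neg at hlam
  obtain ⟨hlamU', hlamB1, hlamB2⟩ := hlam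
  have hlamU : lam ∈ U := Set.notMem_compl_iff.mp hlamU'
  -- Step 3: suppose `pr γ ∉ δ` and get a fiber witness
  by_contra hout
  have hδlam := hδ lam hlamU
  have hβsC : βs ∈ expC tb (vanishingIdeal k (fiberAt A lam)) := by
    have h1 : βs ∉ expD tb (vanishingIdeal k (fiberAt A lam)) := by
      rw [hδlam]; exact hout
    rw [expD, Set.notMem_compl_iff] at h1
    exact h1
  obtain ⟨f, hfI, hflead⟩ := hβsC
  have hf0 : f ≠ 0 := support_nonempty.mp ⟨βs, hflead.1⟩
  -- lift f along the specialization
  rw [hB1 lam hlamB1] at hfI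
  obtain ⟨F0, hF0I, hF0π⟩ :=
    (Ideal.mem_map_iff_of_surjective _ (piLam_surjective lam)).mp hfI
  set Lift : MvPolynomial (Fin n) (Polynomial k) → Prop :=
    fun G => G ∈ Jid ∧ fib lam G = f with hLiftdef
  have hLift0 : Lift (psi k n F0) := by
    constructor
    · rw [hJmem, (psi k n).symm_apply_apply]
      exact hF0I
    · rw [← piLam_apply]
      exact hF0π
  -- choose a lift with minimal top column
  set SS : Set tb.syn := {a | ∃ G, Lift G ∧ tb.toSyn (topCol tb G) = a} with hSSdef
  have hSSne : SS.Nonempty := ⟨_, _, hLift0, rfl⟩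
  have hwf : WellFounded ((· < ·) : tb.syn → tb.syn → Prop) := tb.wf.wf
  obtain ⟨G0, hG0lift, hG0min⟩ : ∃ G, Lift G ∧ ∀ G', Lift G' →
      ¬ tb.toSyn (topCol tb G') < tb.toSyn (topCol tb G) := by
    obtain ⟨G, hG, hGa⟩ := hwf.min_mem SS hSSne
    exact ⟨G, hG, fun G' hG' hlt =>
      hwf.not_lt_min SS ⟨G', hG', rfl⟩ (hGa ▸ hlt)⟩
  set ν0 := topCol tb G0 with hν0
  have hG0J := hG0lift.1
  have hG0f := hG0lift.2
  have hG00 : G0 ≠ 0 := by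
    intro hc
    rw [hc, map_zero] at hG0f
    exact hf0 hG0f.symm
  by_cases hcase : tb.toSyn ν0 ≤ tb.toSyn βs
  · -- Case A : gives a nonzero element of the trivial column ideal
    have hgL : G0.coeff βs ∈ colIdeal tb Jid βs := by
      refine Or.inr ⟨G0, hG0J, rfl, ?_⟩
      intro μ hμ hne2
      exact lt_of_le_of_ne (le_trans (le_topCol tb hG00 hμ) hcase)
        (fun hc => hne2 (tb.toSyn.injective hc))
    have hg0' : G0.coeff βs ≠ 0 := by
      intro hc
      have h1 : (fib lam G0).coeff βs = Polynomial.eval lam (G0.coeff βs) :=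
        coeff_fib lam G0 βs
      rw [hG0f, hc, Polynomial.eval_zero] at h1
      exact mem_support_iff.mp hflead.1 h1
    rw [hLbot] at hgL
    exact hg0' ((Submodule.mem_bot _).mp hgL)
  · -- Case B : reduce the top column, contradicting minimality
    push_neg at hcase
    have hν0mem : ν0 ∈ G0.support := topCol_mem tb hG00
    have hgν0 : G0.coeff ν0 ≠ 0 := mem_support_iff.mp hν0mem
    have hgνL : G0.coeff ν0 ∈ colIdeal tb Jid ν0 := by
      refine Or.inr ⟨G0, hG0J, rfl, ?_⟩
      intro μ hμ hne2
      exact lt_of_le_of_ne (le_topCol tb hG00 hμ)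
        (fun hc => hne2 (tb.toSyn.injective hc))
    have hν0Λ : colIdeal tb Jid ν0 ≠ ⊥ := by
      intro hc
      rw [hc] at hgνL
      exact hgν0 ((Submodule.mem_bot _).mp hgνL)
    have hgenroot : Polynomial.eval lam (hgen tb Jid ν0) ≠ 0 :=
      fun hc => hlamB2 ⟨ν0, hν0Λ, hc⟩
    have hevalgν : Polynomial.eval lam (G0.coeff ν0) = 0 := by
      have h1 : (fib lam G0).coeff ν0 = Polynomial.eval lam (G0.coeff ν0) :=
        coeff_fib lam G0 ν0
      rw [hG0f] at h1
      have h2 : f.coeff ν0 = 0 := by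
        by_contra h3
        have h4 := hflead.2 ν0 (mem_support_iff.mpr h3)
        by_cases h5 : ν0 = βs
        · rw [h5] at hcase
          exact lt_irrefl _ hcase
        · exact lt_asymm hcase (h4 h5)
      rw [h2] at h1
      exact h1.symm
    obtain ⟨u, hu⟩ := hgen_dvd tb Jid ν0 hgνL
    have hevalu : Polynomial.eval lam u = 0 := by
      rw [hu, Polynomial.eval_mul] at hevalgν
      rcases mul_eq_zero.mp hevalgν with h | h
      · exact absurd h hgenroot
      · exact h
    rcases hgen_mem tb Jid ν0 with hzero | ⟨Gh, hGhJ, hGhc, hGhs⟩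
    · exact hgen_ne_zero tb Jid hν0Λ hzero
    set G1 := G0 - C u * Gh with hG1
    have hG1J : G1 ∈ Jid := Submodule.sub_mem _ hG0J (Ideal.mul_mem_left _ _ hGhJ)
    have hG1f : fib lam G1 = f := by
      rw [hG1, map_sub, map_mul, hG0f]
      have hCu : fib (n := n) lam (C u) = C (Polynomial.eval lam u) :=
        MvPolynomial.map_C (Polynomial.evalRingHom lam) u
      rw [hCu, hevalu]
      simp
    have hG10 : G1 ≠ 0 := by
      intro hc
      apply hf0
      rw [← hG1f, hc, map_zero]
    have hcols : ∀ μ ∈ G1.support, tb.toSyn μ < tb.toSyn ν0 := by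
      intro μ hμ
      have hμne : μ ≠ ν0 := by
        intro hc
        subst hc
        rw [mem_support_iff] at hμ
        apply hμ
        rw [hG1, coeff_sub, coeff_C_mul, hGhc, hu]
        ring
      rw [mem_support_iff, hG1, coeff_sub] at hμ
      by_cases h0' : G0.coeff μ = 0
      · have h1 : (C u * Gh).coeff μ ≠ 0 := by
          intro hc
          rw [h0', hc, sub_zero] at hμ
          exact hμ rfl
        have hGhμ : μ ∈ Gh.support := by
          rw [mem_support_iff]
          intro hc
          rw [coeff_C_mul, hc, mul_zero] at h1
          exact h1 rfl
        exact hGhs μ hGhμ hμne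
      · exact lt_of_le_of_ne (le_topCol tb hG00 (mem_support_iff.mpr h0'))
          (fun hc => hμne (tb.toSyn.injective hc))
    exact hG0min G1 ⟨hG1J, hG1f⟩ (hcols _ (topCol_mem tb hG10))

end PartTwo

end GFI


/-- Theorem (generic fiber inheritance): for a product order, if every component of `A` is
an affine `d`-plane having `X₁` among its minimal free variables, and `D(A_λ) = δ` for all
`λ` in a nonempty Zariski-open `U ⊆ 𝔸¹`, then the cuboid `ℕe₁ ⊕ δ = {α : p(α) ∈ δ}` is
contained in `D(A)` and is the largest subset of `D(A)` that is a union of `1`-planes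
`γ + ℕe₁`. -/
theorem generic_fiber_inheritance {k : Type*} [Field k] [Infinite k] {n d mm : ℕ}
    (t : MonomialOrder (Fin (n + 1))) (tb : MonomialOrder (Fin n))
    (hprod : IsProductOrder t tb)
    (P : Fin mm → Set (Fin (n + 1) → k)) (Jc : Fin mm → Finset (Fin (n + 1)))
    (hP : ∀ c, IsAffineDPlane d (P c) ∧ (Jc c).card = d ∧ IsMinFreeVars (P c) (Jc c) ∧
      (0 : Fin (n + 1)) ∈ Jc c)
    (A : Set (Fin (n + 1) → k)) (hA : A = ⋃ c, P c)
    (U : Set k) (hUopen : Uᶜ.Finite) (hUne : U.Nonempty)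
    (δ : Set (Fin n →₀ ℕ))
    (hδ : ∀ lam ∈ U, expD tb (MvPolynomial.vanishingIdeal k (fiberAt A lam)) = δ) :
    {β : Fin (n + 1) →₀ ℕ | pr β ∈ δ} ⊆ expD t (MvPolynomial.vanishingIdeal k A) ∧
      ∀ γ : Fin (n + 1) →₀ ℕ,
        (∀ c : ℕ, γ + Finsupp.single 0 c ∈ expD t (MvPolynomial.vanishingIdeal k A)) →
        pr γ ∈ δ := by
  constructor
  · intro β hβ
    simp only [Set.mem_setOf_eq] at hβ
    rw [expD, Set.mem_compl_iff]
    intro hc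
    obtain ⟨lam, hlamU, hlam⟩ := GFI.part_one hprod A U hUopen hc
    have hd := hδ lam hlamU
    rw [← hd, expD, Set.mem_compl_iff] at hβ
    exact hβ hlam
  · intro γ Hc
    have hplane : ∀ c, ∃ S : AffineSubspace k (Fin (n + 1) → k), P c = ↑S := by
      intro c
      obtain ⟨S, hS, _, _⟩ := (hP c).1
      exact ⟨S, hS⟩
    have hnem : ∀ c, (P c).Nonempty := by
      intro c
      obtain ⟨S, _, hne, _⟩ := (hP c).1
      exact hne
    have hfree : ∀ c, IsFreeVars (P c) (Jc c) := fun c => ((hP c).2.2.1).1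
    have h0 : ∀ c, (0 : Fin (n + 1)) ∈ Jc c := fun c => (hP c).2.2.2
    exact GFI.part_two hprod P hplane hnem Jc hfree h0 A hA U hUopen δ hδ γ Hc
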